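/- An R-S bimodule M is invertible (i.e., there exists an S-R bimodule M' with M ⊗_S M' ≅ R as R-R bimodules and M' ⊗_R M ≅ S as S-S bimodules) if and only if M is a progenerator as a right S-module and the left action map R → End_S(M) is a ring isomorphism. -/

import Mathlib

/-!
STATEMENT 0: Existence of the tensor product of bimodules over noncommutative
rings, with its universal property.

A right `B`-action on `M` is encoded as a left action of `Bᵐᵒᵖ`.
-/

open MulOpposite

/-- `f : M → N → L` is `B`-balanced and `A`-`C` bilinear, where `M` is an
`A`-`B` bimodule, `N` is a `B`-`C` bimodule and `L` is an `A`-`C` bimodule. -/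
structure IsBalancedBilinear (A B C : Type) [Ring A] [Ring B] [Ring C]
    {M N L : Type} [AddCommGroup M] [Module A M] [Module Bᵐᵒᵖ M]
    [AddCommGroup N] [Module B N] [Module Cᵐᵒᵖ N]
    [AddCommGroup L] [Module A L] [Module Cᵐᵒᵖ L]
    (f : M → N → L) : Prop where
  add_left : ∀ m m' n, f (m + m') n = f m n + f m' n
  add_right : ∀ m n n', f m (n + n') = f m n + f m n'
  balanced : ∀ (b : B) m n, f (op b • m) n = f m (b • n)
  map_smul_left : ∀ (a : A) m n, f (a • m) n = a • f m n
  map_smul_right : ∀ (c : C) m n, f m (op c • n) = op c • f m n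

/-- `α` is a homomorphism of `A`-`C` bimodules. -/
def IsBimodHom (A C : Type) [Ring A] [Ring C] {P L : Type}
    [AddCommGroup P] [Module A P] [Module Cᵐᵒᵖ P]
    [AddCommGroup L] [Module A L] [Module Cᵐᵒᵖ L] (α : P → L) : Prop :=
  (∀ x y, α (x + y) = α x + α y) ∧
  (∀ (a : A) x, α (a • x) = a • α x) ∧
  (∀ (c : Cᵐᵒᵖ) x, α (c • x) = c • α x)

/-- A realization of the tensor product `M ⊗[B] N` of an `A`-`B` bimodule `M`
and a `B`-`C` bimodule `N`: an `A`-`C` bimodule `P` together with a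
`B`-balanced `A`-`C` bilinear map `τ` which is universal among such maps. -/
structure BimodTensorProduct (A B C : Type) [Ring A] [Ring B] [Ring C]
    (M N : Type) [AddCommGroup M] [Module A M] [Module Bᵐᵒᵖ M] [SMulCommClass A Bᵐᵒᵖ M]
    [AddCommGroup N] [Module B N] [Module Cᵐᵒᵖ N] [SMulCommClass B Cᵐᵒᵖ N] : Type 1 where
  P : Type
  [instAdd : AddCommGroup P]
  [instL : Module A P]
  [instR : Module Cᵐᵒᵖ P]
  [instComm : SMulCommClass A Cᵐᵒᵖ P]
  τ : M → N → P
  balanced_bilinear : IsBalancedBilinear A B C τ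
  universal : ∀ (L : Type) [AddCommGroup L] [Module A L] [Module Cᵐᵒᵖ L]
      [SMulCommClass A Cᵐᵒᵖ L] (φ : M → N → L), IsBalancedBilinear A B C φ →
      ∃! α : P → L, IsBimodHom A C α ∧ ∀ m n, φ m n = α (τ m n)

/-- `P` is a generator for the category of right `S`-modules:
the functor `Hom_S(P, -)` is faithful. -/
def IsGenerator (S P : Type) [Ring S] [AddCommGroup P] [Module Sᵐᵒᵖ P] : Prop :=
  ∀ (M N : Type) [AddCommGroup M] [Module Sᵐᵒᵖ M] [AddCommGroup N] [Module Sᵐᵒᵖ N]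
    (f g : M →ₗ[Sᵐᵒᵖ] N), (∀ h : P →ₗ[Sᵐᵒᵖ] M, f.comp h = g.comp h) → f = g

/-- The left action map `R → End_S(M)` of an `R`-`S` bimodule `M`, as a ring
homomorphism. -/
def leftActionHom (R S M : Type) [Ring R] [Ring S] [AddCommGroup M] [Module R M]
    [Module Sᵐᵒᵖ M] [SMulCommClass R Sᵐᵒᵖ M] : R →+* Module.End Sᵐᵒᵖ M where
  toFun r :=
    { toFun := fun x => r • x
      map_add' := fun x y => smul_add r x y
      map_smul' := fun s x => smul_comm r s x }
  map_one' := by ext x; exact one_smul R x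
  map_mul' r r' := by ext x; exact mul_smul r r' x
  map_zero' := by ext x; exact zero_smul R x
  map_add' r r' := by ext x; exact add_smul r r' x

/-- Data exhibiting the `R`-`S` bimodule `M` as invertible: an `S`-`R`
bimodule `M'` with `M ⊗[S] M' ≅ R` as `R`-`R` bimodules and `M' ⊗[R] M ≅ S`
as `S`-`S` bimodules. -/
structure InvertibleBimodule (R S M : Type) [Ring R] [Ring S] [AddCommGroup M]
    [Module R M] [Module Sᵐᵒᵖ M] [SMulCommClass R Sᵐᵒᵖ M] : Type 1 where
  M' : Type
  [addM' : AddCommGroup M']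
  [modLM' : Module S M']
  [modRM' : Module Rᵐᵒᵖ M']
  [commM' : SMulCommClass S Rᵐᵒᵖ M']
  T₁ : BimodTensorProduct R S R M M'
  T₂ : BimodTensorProduct S R S M' M
  e₁ : T₁.P → R
  e₁_iso : letI := T₁.instAdd; letI := T₁.instL; letI := T₁.instR; letI := T₁.instComm
    IsBimodHom R R e₁ ∧ Function.Bijective e₁
  e₂ : T₂.P → S
  e₂_iso : letI := T₂.instAdd; letI := T₂.instL; letI := T₂.instR; letI := T₂.instComm
    IsBimodHom S S e₂ ∧ Function.Bijective e₂

section Generic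

attribute [instance] BimodTensorProduct.instAdd BimodTensorProduct.instL
  BimodTensorProduct.instR BimodTensorProduct.instComm

namespace BimodTensorProduct

variable {A B C : Type} [Ring A] [Ring B] [Ring C]
  {M N : Type} [AddCommGroup M] [Module A M] [Module Bᵐᵒᵖ M] [SMulCommClass A Bᵐᵒᵖ M]
  [AddCommGroup N] [Module B N] [Module Cᵐᵒᵖ N] [SMulCommClass B Cᵐᵒᵖ N]
  (T : BimodTensorProduct A B C M N)

lemma tau_zero_left (n : N) : T.τ 0 n = 0 := by
  have h := T.balanced_bilinear.add_left 0 0 n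
  rw [add_zero] at h
  exact (left_eq_add.mp h)

lemma tau_neg_left (m : M) (n : N) : T.τ (-m) n = -T.τ m n := by
  have h := T.balanced_bilinear.add_left m (-m) n
  rw [add_neg_cancel, T.tau_zero_left] at h
  exact (neg_eq_of_add_eq_zero_right h.symm).symm

/-- Every element of the tensor product is a finite sum of pure tensors. -/
theorem mem_pureClosure (p : T.P) :
    p ∈ AddSubmonoid.closure (Set.range fun mn : M × N => T.τ mn.1 mn.2) := by
  set c : AddSubmonoid T.P :=
    AddSubmonoid.closure (Set.range fun mn : M × N => T.τ mn.1 mn.2) with hc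
  have hgen : ∀ m n, T.τ m n ∈ c := fun m n =>
    AddSubmonoid.subset_closure ⟨(m, n), rfl⟩
  have hS : ∀ (a : A), ∀ x ∈ c, a • x ∈ c := by
    intro a x hx
    induction hx using AddSubmonoid.closure_induction with
    | mem y hy => obtain ⟨⟨m, n⟩, rfl⟩ := hy
                  rw [← T.balanced_bilinear.map_smul_left]; exact hgen _ _
    | zero => rw [smul_zero]; exact c.zero_mem
    | add x y _ _ hx hy => rw [smul_add]; exact c.add_mem hx hy
  have hC : ∀ (co : Cᵐᵒᵖ), ∀ x ∈ c, co • x ∈ c := by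
    intro co x hx
    induction hx using AddSubmonoid.closure_induction with
    | mem y hy => obtain ⟨⟨m, n⟩, rfl⟩ := hy
                  obtain ⟨cc, rfl⟩ := MulOpposite.op_surjective co
                  rw [← T.balanced_bilinear.map_smul_right]; exact hgen _ _
    | zero => rw [smul_zero]; exact c.zero_mem
    | add x y _ _ hx hy => rw [smul_add]; exact c.add_mem hx hy
  have hneg : ∀ x ∈ c, -x ∈ c := by
    intro x hx
    induction hx using AddSubmonoid.closure_induction with
    | mem y hy => obtain ⟨⟨m, n⟩, rfl⟩ := hy
                  rw [← T.tau_neg_left]; exact hgen _ _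
    | zero => rw [neg_zero]; exact c.zero_mem
    | add x y _ _ hx hy => rw [neg_add]; exact c.add_mem hx hy
  set G : AddSubgroup T.P := { toAddSubmonoid := c, neg_mem' := fun hx => hneg _ hx } with hG
  letI : SMul A G := ⟨fun a x => ⟨a • x.1, hS a x.1 x.2⟩⟩
  letI : SMul Cᵐᵒᵖ G := ⟨fun co x => ⟨co • x.1, hC co x.1 x.2⟩⟩
  letI : Module A G :=
    { one_smul := fun x => Subtype.ext (one_smul A x.1)
      mul_smul := fun a b x => Subtype.ext (mul_smul a b x.1)
      smul_zero := fun a => Subtype.ext (smul_zero a)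
      smul_add := fun a x y => Subtype.ext (smul_add a x.1 y.1)
      add_smul := fun a b x => Subtype.ext (add_smul a b x.1)
      zero_smul := fun x => Subtype.ext (zero_smul A x.1) }
  letI : Module Cᵐᵒᵖ G :=
    { one_smul := fun x => Subtype.ext (one_smul Cᵐᵒᵖ x.1)
      mul_smul := fun a b x => Subtype.ext (mul_smul a b x.1)
      smul_zero := fun a => Subtype.ext (smul_zero a)
      smul_add := fun a x y => Subtype.ext (smul_add a x.1 y.1)
      add_smul := fun a b x => Subtype.ext (add_smul a b x.1)
      zero_smul := fun x => Subtype.ext (zero_smul Cᵐᵒᵖ x.1) }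
  letI : SMulCommClass A Cᵐᵒᵖ G := ⟨fun a co x => Subtype.ext (smul_comm a co x.1)⟩
  set φ : M → N → G := fun m n => ⟨T.τ m n, hgen m n⟩ with hφdef
  have hφ : IsBalancedBilinear A B C φ :=
    { add_left := fun m m' n => Subtype.ext (T.balanced_bilinear.add_left m m' n)
      add_right := fun m n n' => Subtype.ext (T.balanced_bilinear.add_right m n n')
      balanced := fun b m n => Subtype.ext (T.balanced_bilinear.balanced b m n)
      map_smul_left := fun a m n => Subtype.ext (T.balanced_bilinear.map_smul_left a m n)
      map_smul_right := fun co m n => Subtype.ext (T.balanced_bilinear.map_smul_right co m n) }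
  obtain ⟨α, hα, -⟩ := T.universal G φ hφ
  obtain ⟨γ, -, huniq⟩ := T.universal T.P T.τ T.balanced_bilinear
  have hβ : (fun p => (α p).1) = γ := by
    apply huniq
    refine ⟨⟨fun x y => ?_, fun a x => ?_, fun co x => ?_⟩, fun m n => ?_⟩
    · exact congrArg Subtype.val (hα.1.1 x y)
    · exact congrArg Subtype.val (hα.1.2.1 a x)
    · exact congrArg Subtype.val (hα.1.2.2 co x)
    · exact congrArg Subtype.val (hα.2 m n)
  have hid : (id : T.P → T.P) = γ := by
    apply huniq
    exact ⟨⟨fun _ _ => rfl, fun _ _ => rfl, fun _ _ => rfl⟩, fun _ _ => rfl⟩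
  have : p = (α p).1 := by
    conv_lhs => rw [show p = id p from rfl, hid, ← hβ]
  rw [this]
  exact (α p).2

end BimodTensorProduct
end Generic
section Helpers

open MulOpposite

attribute [instance] InvertibleBimodule.addM' InvertibleBimodule.modLM'
  InvertibleBimodule.modRM' InvertibleBimodule.commM'

lemma IsBimodHom.map_zero' {A C : Type} [Ring A] [Ring C] {P L : Type}
    [AddCommGroup P] [Module A P] [Module Cᵐᵒᵖ P]
    [AddCommGroup L] [Module A L] [Module Cᵐᵒᵖ L] {α : P → L}
    (h : IsBimodHom A C α) : α 0 = 0 := by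
  have := h.1 0 0
  rw [add_zero] at this
  exact (left_eq_add.mp this)

/-- Composition of a balanced bilinear map with a bimodule homomorphism. -/
lemma IsBalancedBilinear.compHom {A B C : Type} [Ring A] [Ring B] [Ring C]
    {M N L L' : Type} [AddCommGroup M] [Module A M] [Module Bᵐᵒᵖ M]
    [AddCommGroup N] [Module B N] [Module Cᵐᵒᵖ N]
    [AddCommGroup L] [Module A L] [Module Cᵐᵒᵖ L]
    [AddCommGroup L'] [Module A L'] [Module Cᵐᵒᵖ L']
    {φ : M → N → L} (hφ : IsBalancedBilinear A B C φ)
    {α : L → L'} (hα : IsBimodHom A C α) :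
    IsBalancedBilinear A B C (fun m n => α (φ m n)) where
  add_left m m' n := by rw [hφ.add_left, hα.1]
  add_right m n n' := by rw [hφ.add_right, hα.1]
  balanced b m n := by rw [hφ.balanced]
  map_smul_left a m n := by rw [hφ.map_smul_left, hα.2.1]
  map_smul_right c m n := by rw [hφ.map_smul_right, hα.2.2]

lemma list_subset_range {α β : Type*} (g : β → α) :
    ∀ l : List α, (∀ y ∈ l, y ∈ Set.range g) → ∃ lp : List β, lp.map g = l := by
  intro l
  induction l with
  | nil => exact fun _ => ⟨[], rfl⟩
  | cons x l ih =>
    intro h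
    obtain ⟨b, hb⟩ := h x List.mem_cons_self
    obtain ⟨lp, hlp⟩ := ih fun y hy => h y (List.mem_cons_of_mem _ hy)
    exact ⟨b :: lp, by simp [hb, hlp]⟩

lemma list_map_sum_eq_fin {γ β : Type*} [AddCommMonoid β] (l : List γ) (g : γ → β) :
    (l.map g).sum = ∑ j : Fin l.length, g (l.get j) := by
  have := (Fin.sum_univ_getElem (l.map g)).symm
  simpa using this

end Helpers

section Helpers2

lemma IsBalancedBilinear.zero_left {A B C : Type} [Ring A] [Ring B] [Ring C]
    {M N L : Type} [AddCommGroup M] [Module A M] [Module Bᵐᵒᵖ M]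
    [AddCommGroup N] [Module B N] [Module Cᵐᵒᵖ N]
    [AddCommGroup L] [Module A L] [Module Cᵐᵒᵖ L]
    {f : M → N → L} (h : IsBalancedBilinear A B C f) (n : N) : f 0 n = 0 := by
  have := h.add_left 0 0 n
  rw [add_zero] at this
  exact (left_eq_add.mp this)

lemma IsBalancedBilinear.zero_right {A B C : Type} [Ring A] [Ring B] [Ring C]
    {M N L : Type} [AddCommGroup M] [Module A M] [Module Bᵐᵒᵖ M]
    [AddCommGroup N] [Module B N] [Module Cᵐᵒᵖ N]
    [AddCommGroup L] [Module A L] [Module Cᵐᵒᵖ L]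
    {f : M → N → L} (h : IsBalancedBilinear A B C f) (m : M) : f m 0 = 0 := by
  have := h.add_right m 0 0
  rw [add_zero] at this
  exact (left_eq_add.mp this)

lemma IsBalancedBilinear.sum_left {A B C : Type} [Ring A] [Ring B] [Ring C]
    {M N L : Type} [AddCommGroup M] [Module A M] [Module Bᵐᵒᵖ M]
    [AddCommGroup N] [Module B N] [Module Cᵐᵒᵖ N]
    [AddCommGroup L] [Module A L] [Module Cᵐᵒᵖ L]
    {f : M → N → L} (h : IsBalancedBilinear A B C f) {ι : Type} (s : Finset ι)
    (v : ι → M) (n : N) : f (∑ j ∈ s, v j) n = ∑ j ∈ s, f (v j) n := by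
  classical
  induction s using Finset.induction_on with
  | empty => simp only [Finset.sum_empty]; exact h.zero_left n
  | insert j s hj ih =>
    rw [Finset.sum_insert hj, Finset.sum_insert hj, h.add_left, ih]

lemma IsBalancedBilinear.sum_right {A B C : Type} [Ring A] [Ring B] [Ring C]
    {M N L : Type} [AddCommGroup M] [Module A M] [Module Bᵐᵒᵖ M]
    [AddCommGroup N] [Module B N] [Module Cᵐᵒᵖ N]
    [AddCommGroup L] [Module A L] [Module Cᵐᵒᵖ L]
    {f : M → N → L} (h : IsBalancedBilinear A B C f) {ι : Type} (s : Finset ι)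
    (m : M) (v : ι → N) : f m (∑ j ∈ s, v j) = ∑ j ∈ s, f m (v j) := by
  classical
  induction s using Finset.induction_on with
  | empty => simp only [Finset.sum_empty]; exact h.zero_right m
  | insert j s hj ih =>
    rw [Finset.sum_insert hj, Finset.sum_insert hj, h.add_right, ih]

lemma op_sum' {S : Type} [Ring S] {n : ℕ} (f : Fin n → S) :
    (MulOpposite.op (∑ j, f j) : Sᵐᵒᵖ) = ∑ j, MulOpposite.op (f j) :=
  map_sum (MulOpposite.opAddEquiv : S ≃+ Sᵐᵒᵖ) f Finset.univ

end Helpers2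
section EndModules

open MulOpposite

variable (R S M : Type) [Ring R] [Ring S] [AddCommGroup M] [Module R M]
  [Module Sᵐᵒᵖ M] [SMulCommClass R Sᵐᵒᵖ M]

/-- Left `R`-action on `End_S(M)` through the codomain. -/
def instModR_endS : Module R (M →ₗ[Sᵐᵒᵖ] M) :=
  haveI : SMulCommClass Sᵐᵒᵖ R M := SMulCommClass.symm _ _ _
  LinearMap.module

/-- Right `R`-action on `End_S(M)` through the domain. -/
def opSmul_endS : SMul Rᵐᵒᵖ (M →ₗ[Sᵐᵒᵖ] M) :=
  ⟨fun ro f =>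
    { toFun := fun x => f (ro.unop • x)
      map_add' := fun x y => by
        show f (ro.unop • (x + y)) = f (ro.unop • x) + f (ro.unop • y)
        rw [smul_add, f.map_add]
      map_smul' := fun s x => by
        show f (ro.unop • (s • x)) = s • f (ro.unop • x)
        rw [smul_comm, f.map_smul] }⟩

def instModRop_endS : Module Rᵐᵒᵖ (M →ₗ[Sᵐᵒᵖ] M) :=
  letI := opSmul_endS R S M
  { one_smul := fun f => LinearMap.ext fun x => by
      show f ((1 : Rᵐᵒᵖ).unop • x) = f x
      rw [unop_one, one_smul]
    mul_smul := fun a b f => LinearMap.ext fun x => by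
      show f ((a * b).unop • x) = f (b.unop • a.unop • x)
      rw [unop_mul, mul_smul]
    smul_zero := fun a => LinearMap.ext fun x => rfl
    smul_add := fun a f g => LinearMap.ext fun x => rfl
    add_smul := fun a b f => LinearMap.ext fun x => by
      show f ((a + b).unop • x) = f (a.unop • x) + f (b.unop • x)
      rw [unop_add, add_smul, f.map_add]
    zero_smul := fun f => LinearMap.ext fun x => by
      show f ((0 : Rᵐᵒᵖ).unop • x) = 0
      rw [unop_zero, zero_smul, f.map_zero] }

def instComm_endS :
    letI := instModR_endS R S M
    letI := instModRop_endS R S M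
    SMulCommClass R Rᵐᵒᵖ (M →ₗ[Sᵐᵒᵖ] M) :=
  letI := instModR_endS R S M
  letI := instModRop_endS R S M
  ⟨fun r ro f => LinearMap.ext fun x => rfl⟩

/-- Left `S`-action on `End_R(M)` through the domain. -/
def sSmul_endR : SMul S (M →ₗ[R] M) :=
  ⟨fun s f =>
    { toFun := fun x => f (op s • x)
      map_add' := fun x y => by
        show f (op s • (x + y)) = f (op s • x) + f (op s • y)
        rw [smul_add, f.map_add]
      map_smul' := fun r x => by
        show f (op s • (r • x)) = r • f (op s • x)
        rw [← smul_comm r (op s) x, f.map_smul] }⟩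

def instModS_endR : Module S (M →ₗ[R] M) :=
  letI := sSmul_endR R S M
  { one_smul := fun f => LinearMap.ext fun x => by
      show f (op (1 : S) • x) = f x
      rw [op_one, one_smul]
    mul_smul := fun a b f => LinearMap.ext fun x => by
      show f (op (a * b) • x) = f (op b • op a • x)
      rw [op_mul, mul_smul]
    smul_zero := fun a => LinearMap.ext fun x => rfl
    smul_add := fun a f g => LinearMap.ext fun x => rfl
    add_smul := fun a b f => LinearMap.ext fun x => by
      show f (op (a + b) • x) = f (op a • x) + f (op b • x)
      rw [op_add, add_smul, f.map_add]
    zero_smul := fun f => LinearMap.ext fun x => by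
      show f (op (0 : S) • x) = 0
      rw [op_zero, zero_smul, f.map_zero] }

def instComm_endR :
    letI := instModS_endR R S M
    SMulCommClass S Sᵐᵒᵖ (M →ₗ[R] M) :=
  letI := instModS_endR R S M
  ⟨fun s so f => LinearMap.ext fun x => rfl⟩

end EndModules
section Forward

open MulOpposite

theorem forward_progenerator (R S M : Type) [Ring R] [Ring S]
    [AddCommGroup M] [Module R M] [Module Sᵐᵒᵖ M] [SMulCommClass R Sᵐᵒᵖ M]
    (I : InvertibleBimodule R S M) :
    Module.Finite Sᵐᵒᵖ M ∧ Module.Projective Sᵐᵒᵖ M ∧ IsGenerator S M ∧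
      Function.Bijective (leftActionHom R S M) := by
  classical
  haveI : SMulCommClass Sᵐᵒᵖ R M := SMulCommClass.symm _ _ _
  obtain ⟨he₁, hbij₁⟩ := I.e₁_iso
  obtain ⟨he₂, hbij₂⟩ := I.e₂_iso
  set f₁ : M → I.M' → R := fun m m' => I.e₁ (I.T₁.τ m m') with hf₁def
  have hf₁ : IsBalancedBilinear R S R f₁ := I.T₁.balanced_bilinear.compHom he₁
  set f₂ : I.M' → M → S := fun m' m => I.e₂ (I.T₂.τ m' m) with hf₂def
  have hf₂ : IsBalancedBilinear S R S f₂ := I.T₂.balanced_bilinear.compHom he₂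
  set E₁ := Equiv.ofBijective I.e₁ hbij₁ with hE₁def
  set E₂ := Equiv.ofBijective I.e₂ hbij₂ with hE₂def
  have hτ₁ : ∀ m m', I.T₁.τ m m' = E₁.symm (f₁ m m') :=
    fun m m' => (E₁.symm_apply_apply (I.T₁.τ m m')).symm
  have hτ₂ : ∀ m' m, I.T₂.τ m' m = E₂.symm (f₂ m' m) :=
    fun m' m => (E₂.symm_apply_apply (I.T₂.τ m' m)).symm
  have hE₁l : ∀ r : R, E₁.symm r = r • E₁.symm 1 := by
    intro r
    apply E₁.injective
    rw [Equiv.apply_symm_apply]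
    show r = I.e₁ (r • E₁.symm 1)
    rw [he₁.2.1, show I.e₁ (E₁.symm 1) = E₁ (E₁.symm 1) from rfl,
      Equiv.apply_symm_apply, smul_eq_mul, mul_one]
  have hE₁r : ∀ r : R, E₁.symm r = op r • E₁.symm 1 := by
    intro r
    apply E₁.injective
    rw [Equiv.apply_symm_apply]
    show r = I.e₁ (op r • E₁.symm 1)
    rw [he₁.2.2, show I.e₁ (E₁.symm 1) = E₁ (E₁.symm 1) from rfl,
      Equiv.apply_symm_apply, op_smul_eq_mul, one_mul]
  have hE₂l : ∀ s : S, E₂.symm s = s • E₂.symm 1 := by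
    intro s
    apply E₂.injective
    rw [Equiv.apply_symm_apply]
    show s = I.e₂ (s • E₂.symm 1)
    rw [he₂.2.1, show I.e₂ (E₂.symm 1) = E₂ (E₂.symm 1) from rfl,
      Equiv.apply_symm_apply, smul_eq_mul, mul_one]
  -- the End_S(M) bimodule
  letI instL1 : Module R (M →ₗ[Sᵐᵒᵖ] M) := instModR_endS R S M
  letI instL1' : Module Rᵐᵒᵖ (M →ₗ[Sᵐᵒᵖ] M) := instModRop_endS R S M
  letI instL1'' : SMulCommClass R Rᵐᵒᵖ (M →ₗ[Sᵐᵒᵖ] M) := instComm_endS R S M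
  -- the map (m, m') ↦ (x ↦ op (f₂ m' x) • m)
  set g₂ : M → I.M' → (M →ₗ[Sᵐᵒᵖ] M) := fun m m' =>
    { toFun := fun x => op (f₂ m' x) • m
      map_add' := fun x y => by
        show op (f₂ m' (x + y)) • m = op (f₂ m' x) • m + op (f₂ m' y) • m
        rw [hf₂.add_right, op_add, add_smul]
      map_smul' := fun s x => by
        show op (f₂ m' (s • x)) • m = s • (op (f₂ m' x) • m)
        rw [show s • x = op s.unop • x from by rw [op_unop],
          hf₂.map_smul_right, op_smul_eq_mul, op_mul, mul_smul, op_unop] } with hg₂def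
  have hg₂ : IsBalancedBilinear R S R g₂ := by
    constructor
    · intro m m'' n
      exact LinearMap.ext fun x => smul_add (op (f₂ n x)) m m''
    · intro m n n'
      refine LinearMap.ext fun x => ?_
      show op (f₂ (n + n') x) • m = op (f₂ n x) • m + op (f₂ n' x) • m
      rw [hf₂.add_left, op_add, add_smul]
    · intro b m n
      refine LinearMap.ext fun x => ?_
      show op (f₂ n x) • (op b • m) = op (f₂ (b • n) x) • m
      rw [hf₂.map_smul_left, smul_eq_mul, op_mul, mul_smul]
    · intro r m n
      exact LinearMap.ext fun x => smul_comm (op (f₂ n x)) r m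
    · intro r m n
      refine LinearMap.ext fun x => ?_
      show op (f₂ (op r • n) x) • m = op (f₂ n (r • x)) • m
      rw [hf₂.balanced]
  obtain ⟨α₂, hα₂, -⟩ := @I.T₁.universal (M →ₗ[Sᵐᵒᵖ] M) _ instL1 instL1' instL1'' g₂ hg₂
  set φ₀ : M →ₗ[Sᵐᵒᵖ] M := α₂ (E₁.symm 1) with hφ₀def
  have hA : ∀ m m' x, op (f₂ m' x) • m = f₁ m m' • φ₀ x := by
    intro m m' x
    have h1 : α₂ (I.T₁.τ m m') = f₁ m m' • φ₀ := by
      rw [hτ₁ m m', hE₁l (f₁ m m'), hα₂.1.2.1]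
      rfl
    calc op (f₂ m' x) • m = (g₂ m m') x := rfl
      _ = (α₂ (I.T₁.τ m m')) x := by rw [← hα₂.2 m m']
      _ = (f₁ m m' • φ₀) x := by rw [h1]
      _ = f₁ m m' • φ₀ x := rfl
  have hφ₀R : ∀ (r : R) (x : M), φ₀ (r • x) = r • φ₀ x := by
    intro r x
    have h2 : α₂ (E₁.symm r) = r • φ₀ := by rw [hE₁l r, hα₂.1.2.1]; rfl
    have h3 : α₂ (E₁.symm r) = op r • φ₀ := by rw [hE₁r r, hα₂.1.2.2]
    have h4 : op r • φ₀ = r • φ₀ := h3.symm.trans h2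
    calc φ₀ (r • x) = (op r • φ₀) x := rfl
      _ = (r • φ₀) x := by rw [h4]
      _ = r • φ₀ x := rfl
  -- the End_R(M) bimodule
  letI instL2 : Module S (M →ₗ[R] M) := instModS_endR R S M
  letI instL2'' : SMulCommClass S Sᵐᵒᵖ (M →ₗ[R] M) := instComm_endR R S M
  set φ' : I.M' → M → (M →ₗ[R] M) := fun m' m =>
    { toFun := fun x => f₁ x m' • m
      map_add' := fun x y => by
        show f₁ (x + y) m' • m = f₁ x m' • m + f₁ y m' • m
        rw [hf₁.add_left, add_smul]
      map_smul' := fun r x => by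
        show f₁ (r • x) m' • m = r • (f₁ x m' • m)
        rw [hf₁.map_smul_left, smul_eq_mul, mul_smul] } with hφ'def
  have hφ' : IsBalancedBilinear S R S φ' := by
    constructor
    · intro y z m
      refine LinearMap.ext fun x => ?_
      show f₁ x (y + z) • m = f₁ x y • m + f₁ x z • m
      rw [hf₁.add_right, add_smul]
    · intro m' m n
      exact LinearMap.ext fun x => smul_add (f₁ x m') m n
    · intro r m' m
      refine LinearMap.ext fun x => ?_
      show f₁ x (op r • m') • m = f₁ x m' • (r • m)
      rw [hf₁.map_smul_right, op_smul_eq_mul, mul_smul]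
    · intro s m' m
      refine LinearMap.ext fun x => ?_
      show f₁ x (s • m') • m = f₁ (op s • x) m' • m
      rw [hf₁.balanced]
    · intro s m' m
      exact LinearMap.ext fun x => smul_comm (f₁ x m') (op s) m
  obtain ⟨α₄, hα₄, -⟩ := I.T₂.universal (M →ₗ[R] M) φ' hφ'
  set δ₀ : M →ₗ[R] M := α₄ (E₂.symm 1) with hδ₀def
  have hF : ∀ m' m x, f₁ x m' • m = δ₀ (op (f₂ m' m) • x) := by
    intro m' m x
    have h1 : α₄ (I.T₂.τ m' m) = f₂ m' m • δ₀ := by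
      rw [hτ₂ m' m, hE₂l (f₂ m' m), hα₄.1.2.1]
    calc f₁ x m' • m = (φ' m' m) x := rfl
      _ = (α₄ (I.T₂.τ m' m)) x := by rw [← hα₄.2 m' m]
      _ = (f₂ m' m • δ₀) x := by rw [h1]
      _ = δ₀ (op (f₂ m' m) • x) := rfl
  have hδ₀S : ∀ (s : S) (x : M), δ₀ (op s • x) = op s • δ₀ x := by
    intro s x
    have hE₂r : E₂.symm s = op s • E₂.symm 1 := by
      apply E₂.injective
      rw [Equiv.apply_symm_apply]
      show s = I.e₂ (op s • E₂.symm 1)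
      rw [he₂.2.2, show I.e₂ (E₂.symm 1) = E₂ (E₂.symm 1) from rfl,
        Equiv.apply_symm_apply, op_smul_eq_mul, one_mul]
    have h2 : α₄ (E₂.symm s) = s • δ₀ := by rw [hE₂l s, hα₄.1.2.1]
    have h3 : α₄ (E₂.symm s) = op s • δ₀ := by rw [hE₂r, hα₄.1.2.2]
    have h4 : s • δ₀ = op s • δ₀ := h2.symm.trans h3
    calc δ₀ (op s • x) = (s • δ₀) x := rfl
      _ = (op s • δ₀) x := by rw [h4]
      _ = op s • δ₀ x := rfl
  -- finite families of pure tensors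
  obtain ⟨l₁, hl₁, hlsum₁⟩ := AddSubmonoid.exists_list_of_mem_closure
    (I.T₁.mem_pureClosure (E₁.symm 1))
  obtain ⟨lp, rfl⟩ := list_subset_range _ l₁ hl₁
  obtain ⟨l₂, hl₂, hlsum₂⟩ := AddSubmonoid.exists_list_of_mem_closure
    (I.T₂.mem_pureClosure (E₂.symm 1))
  obtain ⟨lq, rfl⟩ := list_subset_range _ l₂ hl₂
  set a : Fin lp.length → M := fun j => (lp.get j).1 with hadef
  set b : Fin lp.length → I.M' := fun j => (lp.get j).2 with hbdef
  set c : Fin lq.length → I.M' := fun j => (lq.get j).1 with hcdef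
  set d : Fin lq.length → M := fun j => (lq.get j).2 with hddef
  have hsum1 : ∑ j : Fin lp.length, f₁ (a j) (b j) = 1 := by
    have h := congrArg I.e₁ hlsum₁
    rw [show I.e₁ (E₁.symm 1) = E₁ (E₁.symm 1) from rfl, Equiv.apply_symm_apply] at h
    rw [← h]
    rw [show I.e₁ ((lp.map fun mn => I.T₁.τ mn.1 mn.2).sum)
        = ((lp.map fun mn => I.T₁.τ mn.1 mn.2).map I.e₁).sum from
      (AddMonoidHom.mk' I.e₁ he₁.1).map_list_sum _, List.map_map,
      show (I.e₁ ∘ fun mn => I.T₁.τ mn.1 mn.2) = (fun mn : M × I.M' => f₁ mn.1 mn.2) from rfl]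
    exact (list_map_sum_eq_fin lp (fun mn => f₁ mn.1 mn.2)).symm
  have hsum2 : ∑ j : Fin lq.length, f₂ (c j) (d j) = 1 := by
    have h := congrArg I.e₂ hlsum₂
    rw [show I.e₂ (E₂.symm 1) = E₂ (E₂.symm 1) from rfl, Equiv.apply_symm_apply] at h
    rw [← h]
    rw [show I.e₂ ((lq.map fun mn => I.T₂.τ mn.1 mn.2).sum)
        = ((lq.map fun mn => I.T₂.τ mn.1 mn.2).map I.e₂).sum from
      (AddMonoidHom.mk' I.e₂ he₂.1).map_list_sum _, List.map_map,
      show (I.e₂ ∘ fun mn => I.T₂.τ mn.1 mn.2) = (fun mn : I.M' × M => f₂ mn.1 mn.2) from rfl]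
    exact (list_map_sum_eq_fin lq (fun mn => f₂ mn.1 mn.2)).symm
  -- key identities
  have hstar : ∀ x : M, φ₀ x = ∑ j, op (f₂ (b j) x) • a j := by
    intro x
    calc φ₀ x = (1 : R) • φ₀ x := (one_smul _ _).symm
      _ = (∑ j, f₁ (a j) (b j)) • φ₀ x := by rw [hsum1]
      _ = ∑ j, f₁ (a j) (b j) • φ₀ x := Finset.sum_smul
      _ = ∑ j, op (f₂ (b j) x) • a j := Finset.sum_congr rfl fun j _ => (hA _ _ _).symm
  have hG : ∀ x : M, δ₀ x = ∑ j, f₁ x (c j) • d j := by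
    intro x
    calc δ₀ x = δ₀ ((op (1 : S)) • x) := by rw [op_one, one_smul]
      _ = δ₀ ((op (∑ j, f₂ (c j) (d j))) • x) := by rw [hsum2]
      _ = δ₀ ((∑ j, op (f₂ (c j) (d j))) • x) := by rw [op_sum']
      _ = δ₀ (∑ j, op (f₂ (c j) (d j)) • x) := by rw [Finset.sum_smul]
      _ = ∑ j, δ₀ (op (f₂ (c j) (d j)) • x) := map_sum δ₀ _ _
      _ = ∑ j, f₁ x (c j) • d j := Finset.sum_congr rfl fun j _ => (hF _ _ _).symm
  have hδφ : ∀ x : M, δ₀ (φ₀ x) = x := by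
    intro x
    rw [hstar x, map_sum]
    calc ∑ j, δ₀ (op (f₂ (b j) x) • a j)
        = ∑ j, f₁ (a j) (b j) • x := Finset.sum_congr rfl fun j _ => (hF (b j) x (a j)).symm
      _ = (∑ j, f₁ (a j) (b j)) • x := Finset.sum_smul.symm
      _ = x := by rw [hsum1, one_smul]
  have hφδ : ∀ x : M, φ₀ (δ₀ x) = x := by
    intro x
    rw [hG x, map_sum]
    calc ∑ j, φ₀ (f₁ x (c j) • d j)
        = ∑ j, f₁ x (c j) • φ₀ (d j) := Finset.sum_congr rfl fun j _ => hφ₀R _ _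
      _ = ∑ j, op (f₂ (c j) (d j)) • x := Finset.sum_congr rfl fun j _ => (hA _ _ _).symm
      _ = (∑ j, op (f₂ (c j) (d j))) • x := Finset.sum_smul.symm
      _ = (op (∑ j, f₂ (c j) (d j))) • x := by rw [op_sum']
      _ = x := by rw [hsum2, op_one, one_smul]
  have hdual : ∀ x : M, x = ∑ j, op (f₂ (b j) x) • δ₀ (a j) := by
    intro x
    conv_lhs => rw [← hδφ x]
    rw [hstar x, map_sum]
    exact Finset.sum_congr rfl fun j _ => hδ₀S _ _
  refine ⟨?_, ?_, ?_, ?_, ?_⟩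
  · -- finite
    refine ⟨⟨Finset.univ.image fun j => δ₀ (a j), ?_⟩⟩
    rw [Submodule.eq_top_iff']
    intro x
    rw [hdual x]
    refine Submodule.sum_mem _ fun j _ => Submodule.smul_mem _ _ ?_
    exact Submodule.subset_span
      (Finset.mem_coe.mpr (Finset.mem_image_of_mem _ (Finset.mem_univ j)))
  · -- projective
    set i : M →ₗ[Sᵐᵒᵖ] (Fin lp.length → Sᵐᵒᵖ) :=
      { toFun := fun x j => op (f₂ (b j) x)
        map_add' := fun x y => funext fun j => by
          show op (f₂ (b j) (x + y)) = op (f₂ (b j) x) + op (f₂ (b j) y)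
          rw [hf₂.add_right, op_add]
        map_smul' := fun s x => funext fun j => by
          show op (f₂ (b j) (s • x)) = (s • fun j => op (f₂ (b j) x)) j
          rw [show s • x = op s.unop • x from by rw [op_unop],
            hf₂.map_smul_right, op_smul_eq_mul, op_mul, op_unop]
          rfl } with hidef
    set sct : (Fin lp.length → Sᵐᵒᵖ) →ₗ[Sᵐᵒᵖ] M :=
      { toFun := fun cc => ∑ j, cc j • δ₀ (a j)
        map_add' := fun cc dd => by
          show ∑ j, (cc j + dd j) • δ₀ (a j) = _
          rw [← Finset.sum_add_distrib]
          exact Finset.sum_congr rfl fun j _ => add_smul _ _ _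
        map_smul' := fun s cc => by
          show ∑ j, (s * cc j) • δ₀ (a j) = s • ∑ j, cc j • δ₀ (a j)
          rw [Finset.smul_sum]
          exact Finset.sum_congr rfl fun j _ => mul_smul _ _ _ } with hsctdef
    refine Module.Projective.of_split i sct (LinearMap.ext fun x => ?_)
    show ∑ j, op (f₂ (b j) x) • δ₀ (a j) = x
    exact (hdual x).symm
  · -- generator
    intro X Y _ _ _ _ f g hfg
    refine LinearMap.ext fun x => ?_
    set hmap : Fin lq.length → (M →ₗ[Sᵐᵒᵖ] X) := fun j =>
      { toFun := fun m => op (f₂ (c j) m) • x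
        map_add' := fun m n => by
          show op (f₂ (c j) (m + n)) • x = op (f₂ (c j) m) • x + op (f₂ (c j) n) • x
          rw [hf₂.add_right, op_add, add_smul]
        map_smul' := fun s m => by
          show op (f₂ (c j) (s • m)) • x = s • (op (f₂ (c j) m) • x)
          rw [show s • m = op s.unop • m from by rw [op_unop],
            hf₂.map_smul_right, op_smul_eq_mul, op_mul, mul_smul, op_unop] } with hmapdef
    have hx : x = ∑ j, (hmap j) (d j) := by
      calc x = (op (1 : S)) • x := by rw [op_one, one_smul]
        _ = (op (∑ j, f₂ (c j) (d j))) • x := by rw [hsum2]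
        _ = (∑ j, op (f₂ (c j) (d j))) • x := by rw [op_sum']
        _ = ∑ j, op (f₂ (c j) (d j)) • x := Finset.sum_smul
        _ = ∑ j, (hmap j) (d j) := rfl
    calc f x = ∑ j, f ((hmap j) (d j)) := by rw [hx, map_sum]
      _ = ∑ j, g ((hmap j) (d j)) := Finset.sum_congr rfl fun j _ =>
          LinearMap.congr_fun (hfg (hmap j)) (d j)
      _ = g x := by rw [← map_sum, ← hx]
  · -- injective
    rw [injective_iff_map_eq_zero]
    intro r hr
    have hrx : ∀ x : M, r • x = 0 := fun x => LinearMap.congr_fun hr x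
    calc r = r • (1 : R) := by rw [smul_eq_mul, mul_one]
      _ = r • ∑ j, f₁ (a j) (b j) := by rw [hsum1]
      _ = ∑ j, r • f₁ (a j) (b j) := Finset.smul_sum
      _ = ∑ j, f₁ (r • a j) (b j) := Finset.sum_congr rfl fun j _ =>
          (hf₁.map_smul_left r (a j) (b j)).symm
      _ = ∑ j, f₁ (0 : M) (b j) := by
          refine Finset.sum_congr rfl fun j _ => ?_
          rw [hrx (a j)]
      _ = 0 := by
          rw [Finset.sum_congr rfl fun j _ => hf₁.zero_left (b j)]
          exact Finset.sum_const_zero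
  · -- surjective
    intro ψ
    refine ⟨∑ j, f₁ (ψ (a j)) (b j), ?_⟩
    refine LinearMap.ext fun y => ?_
    show (∑ j, f₁ (ψ (a j)) (b j)) • y = ψ y
    calc (∑ j, f₁ (ψ (a j)) (b j)) • y
        = ∑ j, f₁ (ψ (a j)) (b j) • y := Finset.sum_smul
      _ = ∑ j, op (f₂ (b j) (δ₀ y)) • ψ (a j) := by
          refine Finset.sum_congr rfl fun j _ => ?_
          conv_lhs => rw [← hφδ y]
          exact (hA (ψ (a j)) (b j) (δ₀ y)).symm
      _ = ∑ j, ψ (op (f₂ (b j) (δ₀ y)) • a j) := Finset.sum_congr rfl fun j _ =>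
          (ψ.map_smul _ _).symm
      _ = ψ (∑ j, op (f₂ (b j) (δ₀ y)) • a j) := (map_sum ψ _ _).symm
      _ = ψ (φ₀ (δ₀ y)) := by rw [← hstar (δ₀ y)]
      _ = ψ y := by rw [hφδ y]

end Forward
noncomputable section Construction

open MulOpposite TensorProduct

variable (A B C : Type) [Ring A] [Ring B] [Ring C]
  (M N : Type) [AddCommGroup M] [Module A M] [Module Bᵐᵒᵖ M] [SMulCommClass A Bᵐᵒᵖ M]
  [AddCommGroup N] [Module B N] [Module Cᵐᵒᵖ N] [SMulCommClass B Cᵐᵒᵖ N]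

/-- The balancing relations inside `M ⊗[ℤ] N`. -/
def relSub : Submodule ℤ (TensorProduct ℤ M N) :=
  Submodule.span ℤ
    { x | ∃ (b : B) (m : M) (n : N), x = (op b • m) ⊗ₜ[ℤ] n - m ⊗ₜ[ℤ] (b • n) }

/-- The underlying abelian group of the bimodule tensor product. -/
def QP : Type := TensorProduct ℤ M N ⧸ relSub B M N

instance : AddCommGroup (QP B M N) :=
  inferInstanceAs (AddCommGroup (TensorProduct ℤ M N ⧸ relSub B M N))

instance : Module ℤ (QP B M N) :=
  inferInstanceAs (Module ℤ (TensorProduct ℤ M N ⧸ relSub B M N))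

/-- The canonical bilinear map into the quotient. -/
def tauQ : M → N → QP B M N := fun m n =>
  Submodule.Quotient.mk (m ⊗ₜ[ℤ] n)

lemma QP.ind {p : QP B M N → Prop} (h0 : p 0)
    (ht : ∀ m n, p (tauQ B M N m n))
    (hadd : ∀ x y, p x → p y → p (x + y)) : ∀ q, p q := by
  intro q
  obtain ⟨x, rfl⟩ := Submodule.Quotient.mk_surjective _ q
  induction x using TensorProduct.induction_on with
  | zero => rw [Submodule.Quotient.mk_zero]; exact h0
  | tmul m n => exact ht m n
  | add x y hx hy => rw [Submodule.Quotient.mk_add]; exact hadd _ _ hx hy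

lemma tauQ_add_left (m m' : M) (n : N) :
    tauQ B M N (m + m') n = tauQ B M N m n + tauQ B M N m' n := by
  unfold tauQ
  rw [add_tmul]
  exact Submodule.Quotient.mk_add _

lemma tauQ_add_right (m : M) (n n' : N) :
    tauQ B M N m (n + n') = tauQ B M N m n + tauQ B M N m n' := by
  unfold tauQ
  rw [tmul_add]
  exact Submodule.Quotient.mk_add _

lemma tauQ_balanced (b : B) (m : M) (n : N) :
    tauQ B M N (op b • m) n = tauQ B M N m (b • n) :=
  (Submodule.Quotient.eq _).mpr (Submodule.subset_span ⟨b, m, n, rfl⟩)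

/-- The action of `a : A` on the quotient. -/
def aEndQ (a : A) : QP B M N →ₗ[ℤ] QP B M N :=
  Submodule.mapQ _ _ (LinearMap.rTensor N (DistribMulAction.toAddMonoidHom M a).toIntLinearMap)
    (by
      unfold relSub
      rw [Submodule.span_le]
      rintro x ⟨b, m, n, rfl⟩
      simp only [SetLike.mem_coe, Submodule.mem_comap, map_sub, LinearMap.rTensor_tmul,
        AddMonoidHom.coe_toIntLinearMap, DistribMulAction.toAddMonoidHom_apply]
      show LinearMap.rTensor N _ ((op b • m) ⊗ₜ[ℤ] n - m ⊗ₜ[ℤ] (b • n)) ∈ Submodule.span ℤ _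
      rw [map_sub, LinearMap.rTensor_tmul, LinearMap.rTensor_tmul]
      simp only [AddMonoidHom.coe_toIntLinearMap, DistribMulAction.toAddMonoidHom_apply]
      rw [smul_comm a (op b) m]
      exact Submodule.subset_span ⟨b, a • m, n, rfl⟩ )

/-- The action of `c : Cᵐᵒᵖ` on the quotient. -/
def cEndQ (c : Cᵐᵒᵖ) : QP B M N →ₗ[ℤ] QP B M N :=
  Submodule.mapQ _ _ (LinearMap.lTensor M (DistribMulAction.toAddMonoidHom N c).toIntLinearMap)
    (by
      unfold relSub
      rw [Submodule.span_le]
      rintro x ⟨b, m, n, rfl⟩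
      simp only [SetLike.mem_coe, Submodule.mem_comap, map_sub, LinearMap.lTensor_tmul,
        AddMonoidHom.coe_toIntLinearMap, DistribMulAction.toAddMonoidHom_apply]
      show LinearMap.lTensor M _ ((op b • m) ⊗ₜ[ℤ] n - m ⊗ₜ[ℤ] (b • n)) ∈ Submodule.span ℤ _
      rw [map_sub, LinearMap.lTensor_tmul, LinearMap.lTensor_tmul]
      simp only [AddMonoidHom.coe_toIntLinearMap, DistribMulAction.toAddMonoidHom_apply]
      rw [← smul_comm b c n]
      exact Submodule.subset_span ⟨b, m, c • n, rfl⟩ )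

lemma aEndQ_tau (a : A) (m : M) (n : N) :
    aEndQ A B M N a (tauQ B M N m n) = tauQ B M N (a • m) n := by
  show Submodule.mapQ _ _ _ _ (Submodule.Quotient.mk _) = _
  erw [Submodule.mapQ_apply, LinearMap.rTensor_tmul]
  rfl

lemma cEndQ_tau (c : Cᵐᵒᵖ) (m : M) (n : N) :
    cEndQ B C M N c (tauQ B M N m n) = tauQ B M N m (c • n) := by
  show Submodule.mapQ _ _ _ _ (Submodule.Quotient.mk _) = _
  erw [Submodule.mapQ_apply, LinearMap.lTensor_tmul]
  rfl

/-- The `A`-module structure on the quotient. -/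
def modAQ : Module A (QP B M N) where
  smul a q := aEndQ A B M N a q
  one_smul q := by
    induction q using QP.ind with
    | h0 => exact (aEndQ A B M N 1).map_zero
    | ht m n =>
      show aEndQ A B M N 1 (tauQ B M N m n) = tauQ B M N m n
      rw [aEndQ_tau, one_smul]
    | hadd x y hx hy =>
      show aEndQ A B M N 1 (x + y) = x + y
      rw [map_add]; exact congrArg₂ (· + ·) hx hy
  mul_smul a b q := by
    induction q using QP.ind with
    | h0 =>
      show aEndQ A B M N (a * b) 0 = aEndQ A B M N a (aEndQ A B M N b 0)
      rw [map_zero, map_zero, map_zero]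
    | ht m n =>
      show aEndQ A B M N (a * b) (tauQ B M N m n) = aEndQ A B M N a (aEndQ A B M N b (tauQ B M N m n))
      rw [aEndQ_tau, aEndQ_tau, aEndQ_tau, mul_smul]
    | hadd x y hx hy =>
      show aEndQ A B M N (a * b) (x + y) = aEndQ A B M N a (aEndQ A B M N b (x + y))
      rw [map_add, map_add, map_add]
      exact congrArg₂ (· + ·) hx hy
  smul_zero a := (aEndQ A B M N a).map_zero
  smul_add a x y := (aEndQ A B M N a).map_add x y
  add_smul a b q := by
    induction q using QP.ind with
    | h0 =>
      show aEndQ A B M N (a + b) 0 = aEndQ A B M N a 0 + aEndQ A B M N b 0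
      rw [map_zero, map_zero, map_zero, add_zero]
    | ht m n =>
      show aEndQ A B M N (a + b) (tauQ B M N m n) = aEndQ A B M N a (tauQ B M N m n) + aEndQ A B M N b (tauQ B M N m n)
      rw [aEndQ_tau, aEndQ_tau, aEndQ_tau, add_smul, tauQ_add_left]
    | hadd x y hx hy =>
      show aEndQ A B M N (a + b) (x + y) = aEndQ A B M N a (x + y) + aEndQ A B M N b (x + y)
      have hx' : aEndQ A B M N (a + b) x = aEndQ A B M N a x + aEndQ A B M N b x := hx
      have hy' : aEndQ A B M N (a + b) y = aEndQ A B M N a y + aEndQ A B M N b y := hy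
      rw [map_add, map_add, map_add, hx', hy']
      abel
  zero_smul q := by
    induction q using QP.ind with
    | h0 => exact (aEndQ A B M N 0).map_zero
    | ht m n =>
      show aEndQ A B M N 0 (tauQ B M N m n) = 0
      rw [aEndQ_tau, zero_smul]
      show Submodule.Quotient.mk _ = _
      rw [zero_tmul, Submodule.Quotient.mk_zero]
      rfl
    | hadd x y hx hy =>
      show aEndQ A B M N 0 (x + y) = 0
      have hx' : aEndQ A B M N 0 x = 0 := hx
      have hy' : aEndQ A B M N 0 y = 0 := hy
      rw [map_add, hx', hy', add_zero]

/-- The `Cᵐᵒᵖ`-module structure on the quotient. -/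
def modCQ : Module Cᵐᵒᵖ (QP B M N) where
  smul c q := cEndQ B C M N c q
  one_smul q := by
    induction q using QP.ind with
    | h0 => exact (cEndQ B C M N 1).map_zero
    | ht m n =>
      show cEndQ B C M N 1 (tauQ B M N m n) = tauQ B M N m n
      rw [cEndQ_tau, one_smul]
    | hadd x y hx hy =>
      show cEndQ B C M N 1 (x + y) = x + y
      rw [map_add]; exact congrArg₂ (· + ·) hx hy
  mul_smul a b q := by
    induction q using QP.ind with
    | h0 =>
      show cEndQ B C M N (a * b) 0 = cEndQ B C M N a (cEndQ B C M N b 0)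
      rw [map_zero, map_zero, map_zero]
    | ht m n =>
      show cEndQ B C M N (a * b) (tauQ B M N m n) = cEndQ B C M N a (cEndQ B C M N b (tauQ B M N m n))
      rw [cEndQ_tau, cEndQ_tau, cEndQ_tau, mul_smul]
    | hadd x y hx hy =>
      show cEndQ B C M N (a * b) (x + y) = cEndQ B C M N a (cEndQ B C M N b (x + y))
      rw [map_add, map_add, map_add]
      exact congrArg₂ (· + ·) hx hy
  smul_zero a := (cEndQ B C M N a).map_zero
  smul_add a x y := (cEndQ B C M N a).map_add x y
  add_smul a b q := by
    induction q using QP.ind with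
    | h0 =>
      show cEndQ B C M N (a + b) 0 = cEndQ B C M N a 0 + cEndQ B C M N b 0
      rw [map_zero, map_zero, map_zero, add_zero]
    | ht m n =>
      show cEndQ B C M N (a + b) (tauQ B M N m n) = cEndQ B C M N a (tauQ B M N m n) + cEndQ B C M N b (tauQ B M N m n)
      rw [cEndQ_tau, cEndQ_tau, cEndQ_tau, add_smul, tauQ_add_right]
    | hadd x y hx hy =>
      show cEndQ B C M N (a + b) (x + y) = cEndQ B C M N a (x + y) + cEndQ B C M N b (x + y)
      have hx' : cEndQ B C M N (a + b) x = cEndQ B C M N a x + cEndQ B C M N b x := hx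
      have hy' : cEndQ B C M N (a + b) y = cEndQ B C M N a y + cEndQ B C M N b y := hy
      rw [map_add, map_add, map_add, hx', hy']
      abel
  zero_smul q := by
    induction q using QP.ind with
    | h0 => exact (cEndQ B C M N 0).map_zero
    | ht m n =>
      show cEndQ B C M N 0 (tauQ B M N m n) = 0
      rw [cEndQ_tau, zero_smul]
      show Submodule.Quotient.mk _ = _
      rw [tmul_zero, Submodule.Quotient.mk_zero]
      rfl
    | hadd x y hx hy =>
      show cEndQ B C M N 0 (x + y) = 0
      have hx' : cEndQ B C M N 0 x = 0 := hx
      have hy' : cEndQ B C M N 0 y = 0 := hy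
      rw [map_add, hx', hy', add_zero]

/-- Lifting a balanced bilinear map to the quotient. -/
def liftQ' (L : Type) [AddCommGroup L] [Module A L] [Module Cᵐᵒᵖ L]
    (φ : M → N → L) (hφ : IsBalancedBilinear A B C φ) : QP B M N →ₗ[ℤ] L :=
  Submodule.liftQ _
    (TensorProduct.lift
      ((AddMonoidHom.mk'
        (fun m => (AddMonoidHom.mk' (φ m) (hφ.add_right m)).toIntLinearMap)
        (fun m m' => LinearMap.ext fun n => hφ.add_left m m' n)).toIntLinearMap))
    (by
      unfold relSub
      rw [Submodule.span_le]
      rintro x ⟨b, m, n, rfl⟩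
      simp only [SetLike.mem_coe, LinearMap.mem_ker, map_sub, TensorProduct.lift.tmul]
      show TensorProduct.lift _ ((op b • m) ⊗ₜ[ℤ] n - m ⊗ₜ[ℤ] (b • n)) = 0
      rw [map_sub, TensorProduct.lift.tmul, TensorProduct.lift.tmul]
      show φ (op b • m) n - φ m (b • n) = 0
      rw [hφ.balanced, sub_self])

lemma liftQ'_tau (L : Type) [AddCommGroup L] [Module A L] [Module Cᵐᵒᵖ L]
    (φ : M → N → L) (hφ : IsBalancedBilinear A B C φ) (m : M) (n : N) :
    liftQ' A B C M N L φ hφ (tauQ B M N m n) = φ m n := by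
  show Submodule.liftQ _ _ _ (Submodule.Quotient.mk _) = _
  rfl

end Construction
noncomputable section ConstructionMk

open MulOpposite

variable (A B C : Type) [Ring A] [Ring B] [Ring C]
  (M N : Type) [AddCommGroup M] [Module A M] [Module Bᵐᵒᵖ M] [SMulCommClass A Bᵐᵒᵖ M]
  [AddCommGroup N] [Module B N] [Module Cᵐᵒᵖ N] [SMulCommClass B Cᵐᵒᵖ N]

/-- Existence of the tensor product of bimodules. -/
def bimodTensorProductMk : BimodTensorProduct A B C M N :=
  letI mA : Module A (QP B M N) := modAQ A B M N
  letI mC : Module Cᵐᵒᵖ (QP B M N) := modCQ B C M N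
  haveI comm : SMulCommClass A Cᵐᵒᵖ (QP B M N) := by
    constructor
    intro a c q
    show aEndQ A B M N a (cEndQ B C M N c q) = cEndQ B C M N c (aEndQ A B M N a q)
    induction q using QP.ind with
    | h0 => simp only [map_zero]
    | ht m n => rw [cEndQ_tau, aEndQ_tau, aEndQ_tau, cEndQ_tau]
    | hadd x y hx hy => simp only [map_add]; rw [hx, hy]
  { P := QP B M N
    τ := tauQ B M N
    balanced_bilinear :=
      { add_left := tauQ_add_left B M N
        add_right := tauQ_add_right B M N
        balanced := tauQ_balanced B M N
        map_smul_left := fun a m n => (aEndQ_tau A B M N a m n).symm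
        map_smul_right := fun c m n => (cEndQ_tau B C M N (op c) m n).symm }
    universal := by
        intro L _ _ _ _ φ hφ
        refine ⟨fun q => liftQ' A B C M N L φ hφ q, ⟨⟨?_, ?_, ?_⟩, ?_⟩, ?_⟩
        · exact fun x y => (liftQ' A B C M N L φ hφ).map_add x y
        · -- A-linearity
          intro a q
          show liftQ' A B C M N L φ hφ (aEndQ A B M N a q) = a • liftQ' A B C M N L φ hφ q
          induction q using QP.ind with
          | h0 => rw [map_zero, map_zero, smul_zero]
          | ht m n => rw [aEndQ_tau, liftQ'_tau, liftQ'_tau, hφ.map_smul_left]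
          | hadd x y hx hy => rw [map_add, map_add, map_add, hx, hy, smul_add]
        · -- C-linearity
          intro c q
          show liftQ' A B C M N L φ hφ (cEndQ B C M N c q) = c • liftQ' A B C M N L φ hφ q
          induction q using QP.ind with
          | h0 => rw [map_zero, map_zero, smul_zero]
          | ht m n =>
            rw [cEndQ_tau, liftQ'_tau, liftQ'_tau,
              show φ m (c • n) = φ m (op c.unop • n) from by rw [op_unop],
              hφ.map_smul_right, op_unop]
          | hadd x y hx hy => rw [map_add, map_add, map_add, hx, hy, smul_add]
        · exact fun m n => (liftQ'_tau A B C M N L φ hφ m n).symm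
        · -- uniqueness
          intro α' ⟨hα'hom, hα'eval⟩
          funext q
          induction q using QP.ind with
          | h0 =>
            rw [IsBimodHom.map_zero' hα'hom]
            exact ((liftQ' A B C M N L φ hφ).map_zero).symm
          | ht m n => rw [← hα'eval m n, liftQ'_tau]
          | hadd x y hx hy =>
            rw [hα'hom.1 x y, (liftQ' A B C M N L φ hφ).map_add x y, hx, hy] }

end ConstructionMk
section Backward

open MulOpposite

lemma addhom_list_sum {P β γ : Type} [AddCommGroup P] [AddCommGroup β] (e : P → β)
    (he : ∀ x y, e (x + y) = e x + e y) (l : List γ) (gf : γ → P) :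
    e ((l.map gf).sum) = ∑ j : Fin l.length, e (gf (l.get j)) := by
  have h1 : e ((l.map gf).sum) = ((l.map gf).map e).sum :=
    (AddMonoidHom.mk' e he).map_list_sum (l.map gf)
  rw [h1, List.map_map]
  exact list_map_sum_eq_fin l (e ∘ gf)

variable (R S M : Type) [Ring R] [Ring S] [AddCommGroup M] [Module R M]
  [Module Sᵐᵒᵖ M] [SMulCommClass R Sᵐᵒᵖ M]

/-- Right `R`-action on the dual module `Hom_S(M, S)` through the domain. -/
def opSmul_dual : SMul Rᵐᵒᵖ (M →ₗ[Sᵐᵒᵖ] S) :=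
  ⟨fun ro f =>
    { toFun := fun x => f (ro.unop • x)
      map_add' := fun x y => by
        show f (ro.unop • (x + y)) = f (ro.unop • x) + f (ro.unop • y)
        rw [smul_add, f.map_add]
      map_smul' := fun s x => by
        show f (ro.unop • (s • x)) = s • f (ro.unop • x)
        rw [smul_comm, f.map_smul] }⟩

def instModRop_dual : Module Rᵐᵒᵖ (M →ₗ[Sᵐᵒᵖ] S) :=
  letI := opSmul_dual R S M
  { one_smul := fun f => LinearMap.ext fun x => by
      show f ((1 : Rᵐᵒᵖ).unop • x) = f x
      rw [unop_one, one_smul]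
    mul_smul := fun a b f => LinearMap.ext fun x => by
      show f ((a * b).unop • x) = f (b.unop • a.unop • x)
      rw [unop_mul, mul_smul]
    smul_zero := fun a => LinearMap.ext fun x => rfl
    smul_add := fun a f g => LinearMap.ext fun x => rfl
    add_smul := fun a b f => LinearMap.ext fun x => by
      show f ((a + b).unop • x) = f (a.unop • x) + f (b.unop • x)
      rw [unop_add, add_smul, f.map_add]
    zero_smul := fun f => LinearMap.ext fun x => by
      show f ((0 : Rᵐᵒᵖ).unop • x) = 0
      rw [unop_zero, zero_smul, f.map_zero] }

def instComm_dual :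
    letI := instModRop_dual R S M
    SMulCommClass S Rᵐᵒᵖ (M →ₗ[Sᵐᵒᵖ] S) :=
  letI := instModRop_dual R S M
  ⟨fun s ro f => LinearMap.ext fun x => rfl⟩

theorem backward_invertible
    (hfin : Module.Finite Sᵐᵒᵖ M) (hproj : Module.Projective Sᵐᵒᵖ M)
    (hgen : IsGenerator S M) (hbij : Function.Bijective (leftActionHom R S M)) :
    Nonempty (InvertibleBimodule R S M) := by
  classical
  haveI : SMulCommClass Sᵐᵒᵖ R M := SMulCommClass.symm _ _ _
  letI : Module Rᵐᵒᵖ (M →ₗ[Sᵐᵒᵖ] S) := instModRop_dual R S M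
  haveI : SMulCommClass S Rᵐᵒᵖ (M →ₗ[Sᵐᵒᵖ] S) := instComm_dual R S M
  set Λ := Equiv.ofBijective _ hbij with hΛdef
  -- the pairing M × M' → R
  set θ : M → (M →ₗ[Sᵐᵒᵖ] S) → Module.End Sᵐᵒᵖ M := fun m f =>
    { toFun := fun x => op (f x) • m
      map_add' := fun x y => by
        show op (f (x + y)) • m = op (f x) • m + op (f y) • m
        rw [f.map_add, op_add, add_smul]
      map_smul' := fun so x => by
        show op (f (so • x)) • m = so • (op (f x) • m)
        rw [f.map_smul, show (so • f x : S) = f x * so.unop from rfl, op_mul, op_unop,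
          mul_smul] } with hθdef
  set f₁ : M → (M →ₗ[Sᵐᵒᵖ] S) → R := fun m f => Λ.symm (θ m f) with hf₁def
  have hθ : ∀ m f (x : M), f₁ m f • x = op (f x) • m := fun m f x =>
    LinearMap.congr_fun (Λ.apply_symm_apply (θ m f)) x
  have hΛinj : ∀ r r' : R, (∀ x : M, r • x = r' • x) → r = r' := by
    intro r r' h
    exact hbij.1 (LinearMap.ext h)
  have hf₁ : IsBalancedBilinear R S R f₁ := by
    constructor
    · intro m m' f
      apply hΛinj; intro x
      rw [add_smul, hθ, hθ, hθ, smul_add]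
    · intro m f g
      apply hΛinj; intro x
      rw [add_smul, hθ, hθ, hθ, LinearMap.add_apply, op_add, add_smul]
    · intro s m f
      apply hΛinj; intro x
      rw [hθ, hθ, LinearMap.smul_apply, smul_eq_mul, op_mul, mul_smul]
    · intro r m f
      apply hΛinj; intro x
      rw [hθ, smul_eq_mul, mul_smul, hθ]
      exact smul_comm _ _ _
    · intro r m f
      apply hΛinj; intro x
      rw [hθ, op_smul_eq_mul, mul_smul, hθ]
      rfl
  set f₂ : (M →ₗ[Sᵐᵒᵖ] S) → M → S := fun f m => f m with hf₂def
  have hf₂ : IsBalancedBilinear S R S f₂ := by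
    constructor
    · intro f g m; exact rfl
    · intro f m n; exact f.map_add m n
    · intro r f m; exact rfl
    · intro s f m; exact rfl
    · intro s f m; exact f.map_smul (op s) m
  -- tensor products
  set T₁ := bimodTensorProductMk R S R M (M →ₗ[Sᵐᵒᵖ] S) with hT₁def
  set T₂ := bimodTensorProductMk S R S (M →ₗ[Sᵐᵒᵖ] S) M with hT₂def
  obtain ⟨e₁, he₁, -⟩ := T₁.universal R f₁ hf₁
  obtain ⟨e₂, he₂, -⟩ := T₂.universal S f₂ hf₂
  -- dual basis from finiteness and projectivity
  obtain ⟨sgen, hsgen⟩ := hfin.fg_top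
  set v : Fin sgen.toList.length → M := fun j => sgen.toList.get j with hvdef
  set π : (Fin sgen.toList.length → Sᵐᵒᵖ) →ₗ[Sᵐᵒᵖ] M :=
    { toFun := fun cc => ∑ j, cc j • v j
      map_add' := fun cc dd => by
        show ∑ j, (cc j + dd j) • v j = _
        rw [← Finset.sum_add_distrib]
        exact Finset.sum_congr rfl fun j _ => add_smul _ _ _
      map_smul' := fun so cc => by
        show ∑ j, (so * cc j) • v j = so • ∑ j, cc j • v j
        rw [Finset.smul_sum]
        exact Finset.sum_congr rfl fun j _ => mul_smul _ _ _ } with hπdef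
  have hπsurj : Function.Surjective π := by
    intro x
    have hle : Submodule.span Sᵐᵒᵖ (sgen : Set M) ≤ LinearMap.range π := by
      rw [Submodule.span_le]
      intro y hy
      obtain ⟨j, hj⟩ := List.mem_iff_get.mp ((sgen.mem_toList).mpr (Finset.mem_coe.mp hy))
      refine ⟨(fun i => if i = j then 1 else 0), ?_⟩
      show (∑ i, (if i = j then (1 : Sᵐᵒᵖ) else 0) • v i) = y
      rw [Finset.sum_eq_single_of_mem j (Finset.mem_univ j)
        (fun i _ hij => by rw [if_neg hij, zero_smul]),
        if_pos rfl, one_smul]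
      exact hj
    exact hle (hsgen ▸ Submodule.mem_top)
  obtain ⟨σ, hσ⟩ := Module.projective_lifting_property π LinearMap.id hπsurj
  set g : Fin sgen.toList.length → (M →ₗ[Sᵐᵒᵖ] S) := fun j =>
    { toFun := fun x => unop (σ x j)
      map_add' := fun x y => by
        show unop (σ (x + y) j) = unop (σ x j) + unop (σ y j)
        rw [map_add]; rfl
      map_smul' := fun so x => by
        show unop (σ (so • x) j) = unop (σ x j) * so.unop
        rw [map_smul]; rfl } with hgdef
  have hdual : ∀ x : M, x = ∑ j, op (g j x) • v j := by
    intro x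
    have h1 : π (σ x) = x := LinearMap.congr_fun hσ x
    conv_lhs => rw [← h1]
    show ∑ j, σ x j • v j = _
    exact Finset.sum_congr rfl fun j _ => by rw [show σ x j = op (g j x) from (op_unop _).symm]
  -- trace elements from the generator property
  set traceSet : Set S := Set.range (fun p : (M →ₗ[Sᵐᵒᵖ] S) × M => p.1 p.2) with htrdef
  have hone : (1 : S) ∈ AddSubmonoid.closure traceSet := by
    have hJsmul : ∀ (so : Sᵐᵒᵖ) (x : S), x ∈ AddSubmonoid.closure traceSet →
        so • x ∈ AddSubmonoid.closure traceSet := by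
      intro so x hx
      induction hx using AddSubmonoid.closure_induction with
      | mem y hy =>
        obtain ⟨⟨f, m⟩, rfl⟩ := hy
        exact AddSubmonoid.subset_closure ⟨(f, so • m), (f.map_smul so m)⟩
      | zero => rw [smul_zero]; exact AddSubmonoid.zero_mem _
      | add x y _ _ hx hy => rw [smul_add]; exact AddSubmonoid.add_mem _ hx hy
    set J : Submodule Sᵐᵒᵖ S :=
      { carrier := AddSubmonoid.closure traceSet
        add_mem' := fun hx hy => AddSubmonoid.add_mem _ hx hy
        zero_mem' := AddSubmonoid.zero_mem _
        smul_mem' := fun so x hx => hJsmul so x hx } with hJdef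
    have hq : ∀ h : M →ₗ[Sᵐᵒᵖ] S, J.mkQ.comp h = 0 := by
      intro h
      refine LinearMap.ext fun x => ?_
      rw [LinearMap.comp_apply, Submodule.mkQ_apply, LinearMap.zero_apply,
        Submodule.Quotient.mk_eq_zero]
      exact AddSubmonoid.subset_closure ⟨(h, x), rfl⟩
    have hgen1 := hgen S (S ⧸ J) J.mkQ 0 (fun h => by rw [hq h]; rfl)
    have h1 := LinearMap.congr_fun hgen1 (1 : S)
    rw [Submodule.mkQ_apply, LinearMap.zero_apply, Submodule.Quotient.mk_eq_zero] at h1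
    exact h1
  obtain ⟨lt, hlt, hltsum⟩ := AddSubmonoid.exists_list_of_mem_closure hone
  obtain ⟨lq, rfl⟩ := list_subset_range _ lt hlt
  have htrace : ∑ j : Fin lq.length, (lq.get j).1 ((lq.get j).2) = 1 := by
    rw [← hltsum]
    exact (list_map_sum_eq_fin lq (fun p : (M →ₗ[Sᵐᵒᵖ] S) × M => p.1 p.2)).symm
  -- ∑ f₁ (v j) (g j) = 1
  have hsumdual : ∑ j, f₁ (v j) (g j) = 1 := by
    apply hΛinj
    intro x
    rw [Finset.sum_smul, one_smul]
    calc ∑ j, f₁ (v j) (g j) • x = ∑ j, op (g j x) • v j :=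
          Finset.sum_congr rfl fun j _ => hθ _ _ _
      _ = x := (hdual x).symm
  -- e₁ is bijective
  have hbij₁ : Function.Bijective e₁ := by
    constructor
    · -- injective
      have hker : ∀ p, e₁ p = 0 → p = 0 := by
        intro p hp
        obtain ⟨l0, hl0, hl0sum⟩ := AddSubmonoid.exists_list_of_mem_closure
          (T₁.mem_pureClosure p)
        obtain ⟨lw, rfl⟩ := list_subset_range _ l0 hl0
        have hz : ∑ i : Fin lw.length, f₁ (lw.get i).1 (lw.get i).2 = 0 := by
          have h2 : e₁ ((lw.map fun q => T₁.τ q.1 q.2).sum)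
              = ∑ i : Fin lw.length, e₁ (T₁.τ (lw.get i).1 (lw.get i).2) :=
            addhom_list_sum e₁ he₁.1.1 lw _
          rw [hl0sum, hp] at h2
          rw [Finset.sum_congr rfl fun (i : Fin lw.length) _ => (he₁.2 (lw.get i).1 (lw.get i).2)]
          exact h2.symm
        have hzx : ∀ x : M, ∑ i : Fin lw.length, op ((lw.get i).2 x) • (lw.get i).1 = 0 := by
          intro x
          calc ∑ i : Fin lw.length, op ((lw.get i).2 x) • (lw.get i).1
              = ∑ i : Fin lw.length, f₁ (lw.get i).1 (lw.get i).2 • x :=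
                Finset.sum_congr rfl fun i _ => (hθ _ _ _).symm
            _ = (∑ i : Fin lw.length, f₁ (lw.get i).1 (lw.get i).2) • x := Finset.sum_smul.symm
            _ = 0 := by rw [hz, zero_smul]
        have hinner : ∀ j, (∑ i : Fin lw.length, (g j ((lw.get i).1)) • (lw.get i).2)
            = (0 : M →ₗ[Sᵐᵒᵖ] S) := by
          intro j
          refine LinearMap.ext fun x => ?_
          rw [LinearMap.sum_apply, LinearMap.zero_apply]
          calc ∑ i : Fin lw.length, ((g j ((lw.get i).1)) • (lw.get i).2) x
              = ∑ i : Fin lw.length, g j (op ((lw.get i).2 x) • (lw.get i).1) := by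
                refine Finset.sum_congr rfl fun i _ => ?_
                rw [(g j).map_smul, op_smul_eq_mul]
                rfl
            _ = g j (∑ i : Fin lw.length, op ((lw.get i).2 x) • (lw.get i).1) :=
                (map_sum (g j) _ _).symm
            _ = 0 := by rw [hzx x, (g j).map_zero]
        rw [← hl0sum]
        calc (lw.map fun q => T₁.τ q.1 q.2).sum
            = ∑ i : Fin lw.length, T₁.τ (lw.get i).1 (lw.get i).2 := list_map_sum_eq_fin lw _
          _ = ∑ i : Fin lw.length, T₁.τ (∑ j, op (g j ((lw.get i).1)) • v j) (lw.get i).2 := by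
              refine Finset.sum_congr rfl fun i _ => ?_
              rw [← hdual ((lw.get i).1)]
          _ = ∑ i : Fin lw.length, ∑ j, T₁.τ (op (g j ((lw.get i).1)) • v j) (lw.get i).2 :=
              Finset.sum_congr rfl fun i _ => T₁.balanced_bilinear.sum_left _ _ _
          _ = ∑ i : Fin lw.length, ∑ j, T₁.τ (v j) ((g j ((lw.get i).1)) • (lw.get i).2) :=
              Finset.sum_congr rfl fun i _ => Finset.sum_congr rfl fun j _ =>
                T₁.balanced_bilinear.balanced _ _ _
          _ = ∑ j, ∑ i : Fin lw.length, T₁.τ (v j) ((g j ((lw.get i).1)) • (lw.get i).2) :=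
              Finset.sum_comm
          _ = ∑ j, T₁.τ (v j) (∑ i : Fin lw.length, (g j ((lw.get i).1)) • (lw.get i).2) :=
              Finset.sum_congr rfl fun j _ => (T₁.balanced_bilinear.sum_right _ _ _).symm
          _ = ∑ j, T₁.τ (v j) (0 : M →ₗ[Sᵐᵒᵖ] S) :=
              Finset.sum_congr rfl fun j _ => by rw [hinner j]
          _ = ∑ j, (0 : T₁.P) :=
              Finset.sum_congr rfl fun j _ => T₁.balanced_bilinear.zero_right (v j)
          _ = 0 := Finset.sum_const_zero
      intro p q hpq
      have hsub : e₁ (p - q) = 0 := by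
        have hms : e₁ (p - q) = e₁ p - e₁ q := (AddMonoidHom.mk' e₁ he₁.1.1).map_sub p q
        rw [hms, hpq, sub_self]
      exact sub_eq_zero.mp (hker _ hsub)
    · -- surjective
      intro r
      refine ⟨∑ j, T₁.τ (r • v j) (g j), ?_⟩
      have hms : e₁ (∑ j, T₁.τ (r • v j) (g j)) = ∑ j, e₁ (T₁.τ (r • v j) (g j)) :=
        map_sum (AddMonoidHom.mk' e₁ he₁.1.1) _ _
      rw [hms]
      calc ∑ j, e₁ (T₁.τ (r • v j) (g j))
          = ∑ j, f₁ (r • v j) (g j) :=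
            Finset.sum_congr rfl fun j _ => (he₁.2 _ _).symm
        _ = ∑ j, r • f₁ (v j) (g j) :=
            Finset.sum_congr rfl fun j _ => hf₁.map_smul_left r _ _
        _ = r • ∑ j, f₁ (v j) (g j) := (Finset.smul_sum).symm
        _ = r := by rw [hsumdual, smul_eq_mul, mul_one]
  -- e₂ is bijective
  have hbij₂ : Function.Bijective e₂ := by
    constructor
    · -- injective
      have hker : ∀ p, e₂ p = 0 → p = 0 := by
        intro p hp
        obtain ⟨l0, hl0, hl0sum⟩ := AddSubmonoid.exists_list_of_mem_closure
          (T₂.mem_pureClosure p)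
        obtain ⟨lw, rfl⟩ := list_subset_range _ l0 hl0
        have hz : ∑ i : Fin lw.length, (lw.get i).1 ((lw.get i).2) = 0 := by
          have h2 : e₂ ((lw.map fun q => T₂.τ q.1 q.2).sum)
              = ∑ i : Fin lw.length, e₂ (T₂.τ (lw.get i).1 (lw.get i).2) :=
            addhom_list_sum e₂ he₂.1.1 lw _
          rw [hl0sum, hp] at h2
          rw [Finset.sum_congr rfl fun (i : Fin lw.length) _ => (he₂.2 (lw.get i).1 (lw.get i).2)]
          exact h2.symm
        have hX : ∀ i : Fin lw.length,
            (lw.get i).2 = ∑ j, f₁ ((lw.get i).2) ((lq.get j).1) • ((lq.get j).2) := by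
          intro i
          calc (lw.get i).2 = op (1 : S) • (lw.get i).2 := by rw [op_one, one_smul]
            _ = op (∑ j, (lq.get j).1 ((lq.get j).2)) • (lw.get i).2 := by rw [htrace]
            _ = (∑ j, op ((lq.get j).1 ((lq.get j).2))) • (lw.get i).2 := by rw [op_sum']
            _ = ∑ j, op ((lq.get j).1 ((lq.get j).2)) • (lw.get i).2 := Finset.sum_smul
            _ = ∑ j, f₁ ((lw.get i).2) ((lq.get j).1) • ((lq.get j).2) :=
                Finset.sum_congr rfl fun j _ => (hθ _ _ _).symm
        have hinner : ∀ j, (∑ i : Fin lw.length,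
            op (f₁ ((lw.get i).2) ((lq.get j).1)) • (lw.get i).1) = (0 : M →ₗ[Sᵐᵒᵖ] S) := by
          intro j
          refine LinearMap.ext fun x => ?_
          rw [LinearMap.sum_apply, LinearMap.zero_apply]
          calc ∑ i : Fin lw.length, (op (f₁ ((lw.get i).2) ((lq.get j).1)) • (lw.get i).1) x
              = ∑ i : Fin lw.length, (lw.get i).1 (op ((lq.get j).1 x) • (lw.get i).2) := by
                refine Finset.sum_congr rfl fun i _ => ?_
                show (lw.get i).1 (f₁ ((lw.get i).2) ((lq.get j).1) • x) = _
                rw [hθ]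
            _ = ∑ i : Fin lw.length, ((lw.get i).1 ((lw.get i).2)) * ((lq.get j).1 x) := by
                refine Finset.sum_congr rfl fun i _ => ?_
                rw [((lw.get i).1).map_smul, op_smul_eq_mul]
            _ = (∑ i : Fin lw.length, (lw.get i).1 ((lw.get i).2)) * ((lq.get j).1 x) :=
                (Finset.sum_mul _ _ _).symm
            _ = 0 := by rw [hz, zero_mul]
        rw [← hl0sum]
        calc (lw.map fun q => T₂.τ q.1 q.2).sum
            = ∑ i : Fin lw.length, T₂.τ (lw.get i).1 (lw.get i).2 := list_map_sum_eq_fin lw _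
          _ = ∑ i : Fin lw.length,
                T₂.τ (lw.get i).1 (∑ j, f₁ ((lw.get i).2) ((lq.get j).1) • ((lq.get j).2)) := by
              refine Finset.sum_congr rfl fun i _ => ?_
              rw [← hX i]
          _ = ∑ i : Fin lw.length,
                ∑ j, T₂.τ (lw.get i).1 (f₁ ((lw.get i).2) ((lq.get j).1) • ((lq.get j).2)) :=
              Finset.sum_congr rfl fun i _ => T₂.balanced_bilinear.sum_right _ _ _
          _ = ∑ i : Fin lw.length,
                ∑ j, T₂.τ (op (f₁ ((lw.get i).2) ((lq.get j).1)) • (lw.get i).1) ((lq.get j).2) :=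
              Finset.sum_congr rfl fun i _ => Finset.sum_congr rfl fun j _ =>
                (T₂.balanced_bilinear.balanced _ _ _).symm
          _ = ∑ j, ∑ i : Fin lw.length,
                T₂.τ (op (f₁ ((lw.get i).2) ((lq.get j).1)) • (lw.get i).1) ((lq.get j).2) :=
              Finset.sum_comm
          _ = ∑ j, T₂.τ (∑ i : Fin lw.length,
                op (f₁ ((lw.get i).2) ((lq.get j).1)) • (lw.get i).1) ((lq.get j).2) :=
              Finset.sum_congr rfl fun j _ => (T₂.balanced_bilinear.sum_left _ _ _).symm
          _ = ∑ j, T₂.τ (0 : M →ₗ[Sᵐᵒᵖ] S) ((lq.get j).2) :=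
              Finset.sum_congr rfl fun j _ => by rw [hinner j]
          _ = ∑ j, (0 : T₂.P) :=
              Finset.sum_congr rfl fun j _ => T₂.balanced_bilinear.zero_left ((lq.get j).2)
          _ = 0 := Finset.sum_const_zero
      intro p q hpq
      have hsub : e₂ (p - q) = 0 := by
        have hms : e₂ (p - q) = e₂ p - e₂ q := (AddMonoidHom.mk' e₂ he₂.1.1).map_sub p q
        rw [hms, hpq, sub_self]
      exact sub_eq_zero.mp (hker _ hsub)
    · -- surjective
      intro s0
      refine ⟨∑ j, T₂.τ (s0 • (lq.get j).1) ((lq.get j).2), ?_⟩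
      have hms : e₂ (∑ j, T₂.τ (s0 • (lq.get j).1) ((lq.get j).2))
          = ∑ j, e₂ (T₂.τ (s0 • (lq.get j).1) ((lq.get j).2)) :=
        map_sum (AddMonoidHom.mk' e₂ he₂.1.1) _ _
      rw [hms]
      calc ∑ j, e₂ (T₂.τ (s0 • (lq.get j).1) ((lq.get j).2))
          = ∑ j, (s0 • (lq.get j).1) ((lq.get j).2) :=
            Finset.sum_congr rfl fun j _ => (he₂.2 _ _).symm
        _ = ∑ j, s0 * ((lq.get j).1 ((lq.get j).2)) := rfl
        _ = s0 * ∑ j, (lq.get j).1 ((lq.get j).2) := (Finset.mul_sum _ _ _).symm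
        _ = s0 := by rw [htrace, mul_one]
  exact ⟨InvertibleBimodule.mk (M →ₗ[Sᵐᵒᵖ] S) T₁ T₂ e₁ ⟨he₁.1, hbij₁⟩ e₂ ⟨he₂.1, hbij₂⟩⟩

end Backward
/-- An `R`-`S` bimodule `M` is invertible if and only if `M`
is a progenerator as a right `S`-module and the left action map
`R → End_S(M)` is a ring isomorphism. -/
theorem invertible_iff_progenerator (R S M : Type) [Ring R] [Ring S]
    [AddCommGroup M] [Module R M] [Module Sᵐᵒᵖ M] [SMulCommClass R Sᵐᵒᵖ M] :
    Nonempty (InvertibleBimodule R S M) ↔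
      (Module.Finite Sᵐᵒᵖ M ∧ Module.Projective Sᵐᵒᵖ M ∧ IsGenerator S M ∧
        Function.Bijective (leftActionHom R S M)) := by
  constructor
  · rintro ⟨I⟩
    exact forward_progenerator R S M I
  · rintro ⟨hfin, hproj, hgen, hbij⟩
    exact backward_invertible R S M hfin hproj hgen hbij
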